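/- Let S and S' be filtered λ-ring structures on ℤ[x]/(x⁴) of the following form: S has parameters k ∈ {1, 5} and an even integer d₂, with ψ_2^S(x) = 4x + kx² + d₂x³ and ψ_p^S(x) = p²x + (k·p²(p² − 1)/12)·x² + d_p·x³ for odd primes p, where d_p = p²(p⁴ − 1)·d₂/60 + k²·p²(p² − 1)(p² − 4)/360; and S' is defined likewise with parameters k' ∈ {1, 5} and an even integer d₂'. Then S and S' are isomorphic if and only if k = k' and d₂ ≡ d₂' (mod 60). -/

import Mathlib

open Polynomial

noncomputable section

/-- The truncated polynomial ring `ℤ[x]/(xⁿ)`. -/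
abbrev TP (n : ℕ) : Type := Polynomial ℤ ⧸ Ideal.span {(X : Polynomial ℤ) ^ n}

/-- The class of `x` in `ℤ[x]/(xⁿ)`. -/
def xx (n : ℕ) : TP n := Ideal.Quotient.mk _ (X : Polynomial ℤ)

/-- A filtered λ-ring structure on `ℤ[x]/(xⁿ)`, presented (via Wilkerson's theorem) as a
family of Adams operations `ψ p`, indexed by the primes `p`: each `ψ p` is a ring
endomorphism preserving the filtration ideal `(x)`, they pairwise commute, and
`ψ p r ≡ r ^ p (mod p)`. -/
structure AdamsFamily (n : ℕ) : Type where
  ψ : Nat.Primes → (TP n →+* TP n)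
  maps_ideal : ∀ (p : Nat.Primes), ∀ a ∈ Ideal.span {xx n}, ψ p a ∈ Ideal.span {xx n}
  comm : ∀ p q : Nat.Primes, (ψ p).comp (ψ q) = (ψ q).comp (ψ p)
  frob : ∀ (p : Nat.Primes) (a : TP n),
    ψ p a - a ^ (p : ℕ) ∈ Ideal.span {((p : ℕ) : TP n)}

/-- Isomorphism of filtered λ-ring structures on `ℤ[x]/(xⁿ)`: a filtration-preserving ring
automorphism intertwining the Adams operations. -/
def AdamsIso {n : ℕ} (R S : AdamsFamily n) : Prop :=
  ∃ σ : TP n ≃+* TP n,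
    (Ideal.span {xx n}).map σ.toRingHom = Ideal.span {xx n} ∧
    ∀ p : Nat.Primes, σ.toRingHom.comp (R.ψ p) = (S.ψ p).comp σ.toRingHom

/-- The prime 2 as an element of `Nat.Primes`. -/
def P2 : Nat.Primes := ⟨2, Nat.prime_two⟩

/-- The prime 3 as an element of `Nat.Primes`. -/
def P3 : Nat.Primes := ⟨3, Nat.prime_three⟩

/-- The coefficient `d_p = p²(p⁴ − 1)d₂/60 + k²p²(p² − 1)(p² − 4)/360`. -/
def dcoef (k d2 : ℤ) (p : ℕ) : ℤ :=
  (p : ℤ) ^ 2 * ((p : ℤ) ^ 4 - 1) * d2 / 60 +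
    k ^ 2 * (p : ℤ) ^ 2 * ((p : ℤ) ^ 2 - 1) * ((p : ℤ) ^ 2 - 4) / 360

/-- The coefficient `c_p = k·p²(p² − 1)/12`. -/
def ccoef (k : ℤ) (p : ℕ) : ℤ := k * ((p : ℤ) ^ 2 * ((p : ℤ) ^ 2 - 1)) / 12

/-- The family `S(k, d₂)`: `ψ_2(x) = 4x + kx² + d₂x³` and
`ψ_p(x) = p²x + (k·p²(p² − 1)/12)x² + d_p x³` for odd primes `p`. -/
def SpecKD (k d2 : ℤ) (S : AdamsFamily 4) : Prop :=
  S.ψ P2 (xx 4) = (4 : TP 4) * xx 4 + (k : TP 4) * xx 4 ^ 2 + (d2 : TP 4) * xx 4 ^ 3 ∧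
  ∀ p : Nat.Primes, 2 < (p : ℕ) →
    S.ψ p (xx 4) = ((p : ℕ) : TP 4) ^ 2 * xx 4 + (ccoef k (p : ℕ) : TP 4) * xx 4 ^ 2 +
      (dcoef k d2 (p : ℕ) : TP 4) * xx 4 ^ 3

/- ### Auxiliary lemmas -/


lemma x4 : (xx 4) ^ 4 = 0 := by
  rw [xx, ← map_pow, Ideal.Quotient.eq_zero_iff_mem]
  exact Ideal.mem_span_singleton_self _

lemma hom_ext {f g : TP 4 →+* TP 4} (h : f (xx 4) = g (xx 4)) : f = g := by
  apply Ideal.Quotient.ringHom_ext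
  apply Polynomial.ringHom_ext
  · intro a
    simp only [RingHom.comp_apply, eq_intCast, map_intCast]
  · exact h

lemma pow2 (A B C : TP 4) :
    (A * xx 4 + B * xx 4 ^ 2 + C * xx 4 ^ 3) ^ 2 = A ^ 2 * xx 4 ^ 2 + 2 * A * B * xx 4 ^ 3 := by
  linear_combination ((B ^ 2 + 2 * A * C) + 2 * B * C * xx 4 + C ^ 2 * xx 4 ^ 2) * x4

lemma pow3 (A B C : TP 4) :
    (A * xx 4 + B * xx 4 ^ 2 + C * xx 4 ^ 3) ^ 3 = A ^ 3 * xx 4 ^ 3 := by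
  linear_combination (3 * A ^ 2 * B + (3 * A ^ 2 * C + 3 * A * B ^ 2) * xx 4 +
    (6 * A * B * C + B ^ 3) * xx 4 ^ 2 + (3 * A * C ^ 2 + 3 * B ^ 2 * C) * xx 4 ^ 3 +
    3 * B * C ^ 2 * xx 4 ^ 4 + C ^ 3 * xx 4 ^ 5) * x4

lemma coeffs_inj {a b c d : ℤ}
    (h : (a : TP 4) + (b : TP 4) * xx 4 + (c : TP 4) * xx 4 ^ 2 + (d : TP 4) * xx 4 ^ 3 = 0) :
    a = 0 ∧ b = 0 ∧ c = 0 ∧ d = 0 := by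
  have hmk : (Ideal.Quotient.mk (Ideal.span {(X : Polynomial ℤ) ^ 4}))
      (C a + C b * X + C c * X ^ 2 + C d * X ^ 3) = 0 := by
    rw [map_add, map_add, map_add, map_mul, map_mul, map_mul, map_pow, map_pow]
    simpa only [eq_intCast, map_intCast, xx] using h
  rw [Ideal.Quotient.eq_zero_iff_mem, Ideal.mem_span_singleton, X_pow_dvd_iff] at hmk
  have h0 := hmk 0 (by norm_num)
  have h1 := hmk 1 (by norm_num)
  have h2 := hmk 2 (by norm_num)
  have h3 := hmk 3 (by norm_num)
  simp only [coeff_add, coeff_C_mul, coeff_X_pow, coeff_C, coeff_X] at h0 h1 h2 h3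
  norm_num at h0 h1 h2 h3
  exact ⟨h0, h1, h2, h3⟩

lemma rep (t : TP 4) : ∃ a b c d : ℤ,
    t = (a : TP 4) + (b : TP 4) * xx 4 + (c : TP 4) * xx 4 ^ 2 + (d : TP 4) * xx 4 ^ 3 := by
  obtain ⟨P, rfl⟩ := Ideal.Quotient.mk_surjective t
  refine ⟨P.coeff 0, P.coeff 1, P.coeff 2, P.coeff 3, ?_⟩
  have key : (Ideal.Quotient.mk (Ideal.span {(X : Polynomial ℤ) ^ 4}))
      (P - (C (P.coeff 0) + C (P.coeff 1) * X + C (P.coeff 2) * X ^ 2 +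
        C (P.coeff 3) * X ^ 3)) = 0 := by
    rw [Ideal.Quotient.eq_zero_iff_mem, Ideal.mem_span_singleton, X_pow_dvd_iff]
    intro d hd
    interval_cases d <;>
      · simp only [coeff_sub, coeff_add, coeff_C_mul, coeff_X_pow, coeff_C, coeff_X]
        norm_num
  rw [map_sub, sub_eq_zero] at key
  rw [key, map_add, map_add, map_add, map_mul, map_mul, map_mul, map_pow, map_pow]
  simp only [eq_intCast, map_intCast]
  rfl

def lifthom (a : TP 4) (h : a ^ 4 = 0) : TP 4 →+* TP 4 :=
  Ideal.Quotient.lift _ (eval₂RingHom (Int.castRingHom (TP 4)) a) (by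
    intro P hP
    rw [Ideal.mem_span_singleton] at hP
    obtain ⟨Q, rfl⟩ := hP
    simp [coe_eval₂RingHom, eval₂_mul, eval₂_pow, h])

lemma lifthom_x (a : TP 4) (h : a ^ 4 = 0) : lifthom a h (xx 4) = a := by
  simp [lifthom, xx, Ideal.Quotient.lift_mk, coe_eval₂RingHom]

lemma sig4 (c : ℤ) : (xx 4 + (c : TP 4) * xx 4 ^ 3) ^ 4 = 0 := by
  have h : xx 4 + (c : TP 4) * xx 4 ^ 3 = xx 4 * (1 + (c : TP 4) * xx 4 ^ 2) := by ring
  rw [h, mul_pow, x4, zero_mul]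

lemma sig4' (c : ℤ) : (xx 4 - (c : TP 4) * xx 4 ^ 3) ^ 4 = 0 := by
  have h : xx 4 - (c : TP 4) * xx 4 ^ 3 = xx 4 * (1 - (c : TP 4) * xx 4 ^ 2) := by ring
  rw [h, mul_pow, x4, zero_mul]

def sigma (c : ℤ) : TP 4 ≃+* TP 4 :=
  (fun f g h₂ h₁ => RingEquiv.ofRingHom f g h₁ h₂) (lifthom (xx 4 + (c : TP 4) * xx 4 ^ 3) (sig4 c))
    (lifthom (xx 4 - (c : TP 4) * xx 4 ^ 3) (sig4' c))
    (by
      apply hom_ext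
      simp only [RingHom.comp_apply, RingHom.coe_coe, RingHom.id_apply, lifthom_x, map_add,
        map_sub, map_mul, map_pow, map_intCast]
      linear_combination (-3 * (c : TP 4) ^ 2 * xx 4 + 3 * (c : TP 4) ^ 3 * xx 4 ^ 3 -
        (c : TP 4) ^ 4 * xx 4 ^ 5) * x4)
    (by
      apply hom_ext
      simp only [RingHom.comp_apply, RingHom.coe_coe, RingHom.id_apply, lifthom_x, map_add,
        map_sub, map_mul, map_pow, map_intCast]
      linear_combination (-3 * (c : TP 4) ^ 2 * xx 4 - 3 * (c : TP 4) ^ 3 * xx 4 ^ 3 -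
        (c : TP 4) ^ 4 * xx 4 ^ 5) * x4)

lemma sigma_x (c : ℤ) : sigma c (xx 4) = xx 4 + (c : TP 4) * xx 4 ^ 3 :=
  lifthom_x _ (sig4 c)

lemma div60 {n : ℤ} (hodd : n % 2 = 1) : 60 ∣ n ^ 2 * (n ^ 4 - 1) := by
  have h : n % 60 ≡ n [ZMOD 60] := Int.emod_emod_of_dvd n dvd_rfl
  have hmod : (n % 60) ^ 2 * ((n % 60) ^ 4 - 1) ≡ n ^ 2 * (n ^ 4 - 1) [ZMOD 60] :=
    (h.pow 2).mul ((h.pow 4).sub_right 1)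
  have hdvd := hmod.dvd
  have h2 : (n % 60) % 2 = 1 := by omega
  have h0 : 0 ≤ n % 60 := Int.emod_nonneg n (by norm_num)
  have h1 : n % 60 < 60 := Int.emod_lt_of_pos n (by norm_num)
  set r := n % 60 with hr
  have key : (60 : ℤ) ∣ r ^ 2 * (r ^ 4 - 1) := by
    clear hdvd hmod h hr; revert h2; interval_cases r <;> decide
  have heq : n ^ 2 * (n ^ 4 - 1) =
      (n ^ 2 * (n ^ 4 - 1) - r ^ 2 * (r ^ 4 - 1)) + r ^ 2 * (r ^ 4 - 1) := by ring
  rw [heq]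
  exact dvd_add hdvd key

lemma dcoef_diff {p : ℕ} (hp : (p : ℤ) % 2 = 1) (k d2' c : ℤ) :
    dcoef k (d2' + 60 * c) p = dcoef k d2' p + (p : ℤ) ^ 2 * ((p : ℤ) ^ 4 - 1) * c := by
  obtain ⟨m, hm⟩ := div60 hp
  unfold dcoef
  have h1 : (p : ℤ) ^ 2 * ((p : ℤ) ^ 4 - 1) * (d2' + 60 * c) = 60 * (m * (d2' + 60 * c)) := by
    rw [hm]; ring
  have h2 : (p : ℤ) ^ 2 * ((p : ℤ) ^ 4 - 1) * d2' = 60 * (m * d2') := by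
    rw [hm]; ring
  rw [h1, h2, Int.mul_ediv_cancel_left _ (by norm_num), Int.mul_ediv_cancel_left _ (by norm_num)]
  rw [hm]; ring

theorem stmt15 (k k' d2 d2' : ℤ) (hk : k = 1 ∨ k = 5) (hk' : k' = 1 ∨ k' = 5)
    (hd2 : Even d2) (hd2' : Even d2')
    (S S' : AdamsFamily 4) (hS : SpecKD k d2 S) (hS' : SpecKD k' d2' S') :
    AdamsIso S S' ↔ (k = k' ∧ Int.ModEq 60 d2 d2') := by
  constructor
  · rintro ⟨σ, hI, hcomm⟩
    -- σ(x) lies in (x), so it has the form z0 x + z1 x² + z2 x³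
    have hmem : σ.toRingHom (xx 4) ∈ Ideal.span {xx 4} := by
      rw [← hI]
      exact Ideal.mem_map_of_mem _ (Ideal.mem_span_singleton_self _)
    obtain ⟨t, ht⟩ := Ideal.mem_span_singleton'.mp hmem
    obtain ⟨a0, z0, z1, z2, ht2⟩ := rep t
    have hσx : σ.toRingHom (xx 4) =
        (a0 : TP 4) * xx 4 + (z0 : TP 4) * xx 4 ^ 2 + (z1 : TP 4) * xx 4 ^ 3 := by
      rw [← ht, ht2]
      linear_combination ((z2 : TP 4)) * x4
    -- rename for readability: σ x = z0' x + z1' x² + z2' x³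
    clear ht ht2 hmem
    obtain ⟨w, w0, w1, w2, hw⟩ := rep (σ.symm (xx 4))
    have E0 : σ.toRingHom ((w : TP 4) + (w0 : TP 4) * xx 4 + (w1 : TP 4) * xx 4 ^ 2 +
        (w2 : TP 4) * xx 4 ^ 3) = xx 4 := by
      rw [← hw]
      exact σ.apply_symm_apply _
    simp only [map_add, map_mul, map_pow, map_intCast] at E0
    rw [hσx] at E0
    simp only [pow2, pow3] at E0
    have key0 := coeffs_inj (a := w) (b := w0 * a0 - 1) (c := w0 * z0 + w1 * a0 ^ 2)
      (d := w0 * z1 + 2 * w1 * a0 * z0 + w2 * a0 ^ 3)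
      (by push_cast; linear_combination E0)
    have hunit : w0 * a0 = 1 := by
      have := key0.2.1; linarith
    have EP := RingHom.congr_fun (hcomm P2) (xx 4)
    simp only [RingHom.comp_apply] at EP
    rw [hS.1] at EP
    simp only [map_add, map_mul, map_pow, map_intCast, map_ofNat] at EP
    rw [hσx] at EP
    simp only [map_add, map_mul, map_pow, map_intCast] at EP
    rw [hS'.1] at EP
    simp only [pow2, pow3] at EP
    have key2 := coeffs_inj (a := 0) (b := 4 * a0 - 4 * a0)
      (c := (4 * z0 + k * a0 ^ 2) - (k' * a0 + 16 * z0))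
      (d := (4 * z1 + 2 * k * a0 * z0 + d2 * a0 ^ 3) - (d2' * a0 + 8 * k' * z0 + 64 * z1))
      (by push_cast; linear_combination EP)
    have hc2 := key2.2.2.1
    have hd3 := key2.2.2.2
    have ha0 : a0 = 1 ∨ a0 = -1 := by
      rcases Int.eq_one_or_neg_one_of_mul_eq_one' hunit with ⟨_, h⟩ | ⟨_, h⟩
      · exact Or.inl h
      · exact Or.inr h
    rcases ha0 with rfl | rfl
    · ring_nf at hc2 hd3
      constructor
      · rcases hk with rfl | rfl <;> rcases hk' with rfl | rfl <;> omega
      · have hkk : k = k' := by rcases hk with rfl | rfl <;> rcases hk' with rfl | rfl <;> omega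
        have hz0 : z0 = 0 := by rcases hk with rfl | rfl <;> rcases hk' with rfl | rfl <;> omega
        subst hkk hz0
        have : d2' - d2 = 60 * (-z1) := by ring_nf at hd3 ⊢; omega
        exact Int.modEq_iff_dvd.mpr ⟨-z1, this⟩
    · exfalso
      ring_nf at hc2
      rcases hk with rfl | rfl <;> rcases hk' with rfl | rfl <;> omega
  · rintro ⟨rfl, hmod⟩
    obtain ⟨c0, hc0⟩ := Int.modEq_iff_dvd.mp hmod
    have hc : d2 = d2' + 60 * (-c0) := by linarith
    subst hc
    set c : ℤ := -c0 with hcdef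
    clear_value c
    clear hc0 hcdef hmod hd2 hd2'
    refine ⟨sigma c, ?_, ?_⟩
    · -- ideal condition
      rw [Ideal.map_span, Set.image_singleton]
      have hsx : (sigma c).toRingHom (xx 4) = xx 4 + (c : TP 4) * xx 4 ^ 3 := sigma_x c
      apply le_antisymm
      · rw [Ideal.span_le, Set.singleton_subset_iff, SetLike.mem_coe,
          Ideal.mem_span_singleton', hsx]
        exact ⟨1 + (c : TP 4) * xx 4 ^ 2, by ring⟩
      · rw [Ideal.span_le, Set.singleton_subset_iff, SetLike.mem_coe,
          Ideal.mem_span_singleton', hsx]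
        refine ⟨1 - (c : TP 4) * xx 4 ^ 2, ?_⟩
        linear_combination (-(c : TP 4) ^ 2 * xx 4) * x4
    · intro p
      apply hom_ext
      simp only [RingHom.comp_apply, RingEquiv.toRingHom_eq_coe, RingEquiv.coe_toRingHom]
      have hs : sigma c (xx 4) =
          (1 : TP 4) * xx 4 + (0 : TP 4) * xx 4 ^ 2 + (c : TP 4) * xx 4 ^ 3 := by
        rw [sigma_x]; ring
      by_cases hp : (p : ℕ) = 2
      · have hP : p = P2 := Subtype.ext hp
        subst hP
        rw [hS.1]
        simp only [map_add, map_mul, map_pow, map_ofNat, map_intCast]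
        rw [hs]
        simp only [map_add, map_mul, map_pow, map_one, map_zero, map_intCast]
        rw [hS'.1]
        simp only [pow2, pow3]
        push_cast
        ring
      · have hodd : 2 < (p : ℕ) := lt_of_le_of_ne p.2.two_le (Ne.symm hp)
        rw [hS.2 p hodd]
        simp only [map_add, map_mul, map_pow, map_natCast, map_intCast]
        rw [hs]
        simp only [map_add, map_mul, map_pow, map_one, map_zero, map_intCast]
        rw [hS'.2 p hodd]
        simp only [pow2, pow3]
        have hpodd : ((p : ℕ) : ℤ) % 2 = 1 := by
          have h2 := Nat.odd_iff.mp (p.2.odd_of_ne_two hp)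
          omega
        have hd := dcoef_diff hpodd k d2' c
        rw [hd]
        push_cast
        ring
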